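/- The polynomial f_0(z) = z - 1/(d z^d) is injective on the unit circle: if z, w lie on the unit circle in the complex plane and z - 1/(d z^d) = w - 1/(d w^d), then z = w. -/

import Mathlib

open Complex

lemma aux_geom_abs_lt (u : ℂ) (hu : ‖u‖ = 1) (hne : u ≠ 1) (n : ℕ) (hn : 2 ≤ n) :
    ‖∑ i ∈ Finset.range n, u ^ i‖ < n := by
  have hnorm : Complex.normSq u = 1 := by
    rw [← Complex.sq_norm, hu]; norm_num
  have hre1 : u.re ≤ 1 := by
    have h1 := Complex.abs_re_le_norm u
    rw [hu] at h1
    exact (abs_le.mp h1).2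
  have hre : u.re < 1 := by
    rcases lt_or_eq_of_le hre1 with h1 | h1
    · exact h1
    · exfalso
      apply hne
      have him : u.im = 0 := by
        have : u.re * u.re + u.im * u.im = 1 := hnorm
        nlinarith [sq_nonneg u.im]
      exact Complex.ext h1 him
  have habs2 : ‖1 + u‖ < 2 := by
    have hn2 : u.re * u.re + u.im * u.im = 1 := by
      rw [← Complex.normSq_apply]; exact hnorm
    have hsq : (‖1 + u‖) ^ 2 = 2 + 2 * u.re := by
      rw [Complex.sq_norm, Complex.normSq_apply]
      simp only [Complex.add_re, Complex.add_im, Complex.one_re, Complex.one_im]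
      nlinarith [hn2]
    have : (‖1 + u‖) ^ 2 < 2 ^ 2 := by rw [hsq]; nlinarith
    exact lt_of_pow_lt_pow_left₀ 2 (by norm_num) this
  have hsplit : ∑ i ∈ Finset.range n, u ^ i = (1 + u) + ∑ i ∈ Finset.Ico 2 n, u ^ i := by
    rw [Finset.range_eq_Ico, ← Finset.sum_Ico_consecutive _ (by norm_num : 0 ≤ 2) hn]
    congr 1
    rw [← Finset.range_eq_Ico]
    simp [Finset.sum_range_succ]
  have htail : ‖∑ i ∈ Finset.Ico 2 n, u ^ i‖ ≤ (n : ℝ) - 2 := by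
    calc ‖∑ i ∈ Finset.Ico 2 n, u ^ i‖
        ≤ ∑ i ∈ Finset.Ico 2 n, ‖u ^ i‖ := by
          exact norm_sum_le _ _
      _ = ∑ i ∈ Finset.Ico 2 n, (1 : ℝ) := by
          apply Finset.sum_congr rfl; intro i _; rw [norm_pow, hu, one_pow]
      _ = (n : ℝ) - 2 := by
          rw [Finset.sum_const, Nat.card_Ico, nsmul_eq_mul, mul_one, Nat.cast_sub hn]
          norm_num
  calc ‖∑ i ∈ Finset.range n, u ^ i‖
      ≤ ‖1 + u‖ + ‖∑ i ∈ Finset.Ico 2 n, u ^ i‖ := by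
        rw [hsplit]; exact norm_add_le _ _
    _ < 2 + ((n : ℝ) - 2) := by linarith
    _ = n := by ring

/-- The polynomial `f₀(z) = z - 1/(d z^d)` is injective on the unit circle:
if `z, w` lie on the unit circle and `f₀ z = f₀ w`, then `z = w`. -/
theorem stmt_0 (d : ℕ) (hd : 2 ≤ d) (z w : ℂ)
    (hz : ‖z‖ = 1) (hw : ‖w‖ = 1)
    (h : z - 1 / (d * z ^ d) = w - 1 / (d * w ^ d)) : z = w := by
  by_contra hne
  have hz0 : z ≠ 0 := by intro h0; rw [h0] at hz; simp at hz
  have hw0 : w ≠ 0 := by intro h0; rw [h0] at hw; simp at hw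
  have hd0 : (d : ℂ) ≠ 0 := by
    simp only [ne_eq, Nat.cast_eq_zero]; omega
  have hzd : z ^ d ≠ 0 := pow_ne_zero _ hz0
  have hwd : w ^ d ≠ 0 := pow_ne_zero _ hw0
  have key : (z - w) * ((d : ℂ) * z ^ d * w ^ d) = w ^ d - z ^ d := by
    field_simp at h
    apply mul_left_cancel₀ hd0
    linear_combination (d : ℂ) * h
  have habs : ‖z - w‖ * d = ‖z ^ d - w ^ d‖ := by
    have h2 := congrArg Norm.norm key
    rw [norm_mul, norm_mul, norm_mul, norm_pow, norm_pow, hz, hw, Complex.norm_natCast,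
      one_pow] at h2
    rw [show ‖z ^ d - w ^ d‖ = ‖w ^ d - z ^ d‖ from
      norm_sub_rev _ _, ← h2]
    ring
  have hgeom := geom_sum₂_mul z w d
  have habs2 : ‖z ^ d - w ^ d‖ =
      ‖∑ i ∈ Finset.range d, z ^ i * w ^ (d - 1 - i)‖ * ‖z - w‖ := by
    rw [← hgeom, norm_mul]
  have hzw0 : ‖z - w‖ ≠ 0 := by
    simp only [ne_eq, norm_eq_zero, sub_eq_zero]
    exact hne
  have hSd : ‖∑ i ∈ Finset.range d, z ^ i * w ^ (d - 1 - i)‖ = d := by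
    have : ‖z - w‖ * d =
        ‖∑ i ∈ Finset.range d, z ^ i * w ^ (d - 1 - i)‖ * ‖z - w‖ := by
      rw [habs, habs2]
    field_simp at this
    rcases mul_eq_mul_right_iff.mp (by linarith [this] : ‖∑ i ∈ Finset.range d, z ^ i * w ^ (d - 1 - i)‖ * ‖z - w‖ = (d : ℝ) * ‖z - w‖) with h3 | h3
    · exact h3
    · exact absurd h3 hzw0
  have hS : ∑ i ∈ Finset.range d, z ^ i * w ^ (d - 1 - i) =
      w ^ (d - 1) * ∑ i ∈ Finset.range d, (z / w) ^ i := by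
    rw [Finset.mul_sum]
    apply Finset.sum_congr rfl
    intro i hi
    rw [Finset.mem_range] at hi
    have hi' : i ≤ d - 1 := by omega
    rw [div_pow, pow_sub₀ w hw0 hi']
    field_simp
  have hu : ‖z / w‖ = 1 := by rw [norm_div, hz, hw]; norm_num
  have hune : z / w ≠ 1 := by
    intro h1
    apply hne
    field_simp at h1
    exact h1
  have hlt := aux_geom_abs_lt (z / w) hu hune d hd
  rw [hS, norm_mul, norm_pow, hw, one_pow, one_mul] at hSd
  linarith
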